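/- Let G ⊆ ℝⁿ be open, f : G → ℝⁿ a local homeomorphism, Q ⊆ ℝⁿ a simply connected and locally path-connected set, and P a connected component of f⁻¹(Q) with compact closure contained in G. Then f maps P homeomorphically onto Q. -/

import Mathlib

open Set Topology unitInterval

noncomputable section

namespace Stmt17

variable {E X : Type*} [TopologicalSpace E] [TopologicalSpace X] {F : E → X}

/-- Every point of the base has an open nbhd `V` such that through every point of `F ⁻¹' V`
there is a continuous section of `F` defined on all of `V`. -/
def GoodCover (F : E → X) : Prop :=
  ∀ x : X, ∃ V : Set X, IsOpen V ∧ x ∈ V ∧ ∀ e : E, F e ∈ V →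
    ∃ s : X → E, ContinuousOn s V ∧ (∀ y ∈ V, F (s y) = y) ∧ s (F e) = e

def LocInj (F : E → X) : Prop := ∀ e : E, ∃ W ∈ 𝓝 e, Set.InjOn F W

lemma absorb [T2Space E] (hFc : Continuous F) (hinj : LocInj F)
    {V : Set X} (hV : IsOpen V) {s : X → E} (hs : ContinuousOn s V)
    (hsec : ∀ y ∈ V, F (s y) = y) {C : Set E} (hC : IsPreconnected C)
    (hmap : Set.MapsTo F C V) {e : E} (heC : e ∈ C) (he : s (F e) = e) :
    ∀ c ∈ C, s (F c) = c := by
  classical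
  set W₀ : Set E := F ⁻¹' V with hW₀
  have hW₀o : IsOpen W₀ := hV.preimage hFc
  have hg : ContinuousOn (fun c => s (F c)) W₀ := hs.comp hFc.continuousOn (fun c hc => hc)
  set D : Set E := {c | c ∈ W₀ ∧ s (F c) = c} with hD
  have hDo : IsOpen D := by
    rw [isOpen_iff_mem_nhds]
    rintro c₀ ⟨hc₀, hfix⟩
    obtain ⟨W, hWnhds, hWinj⟩ := hinj c₀
    have hcA : ContinuousAt (fun c => s (F c)) c₀ := hg.continuousAt (hW₀o.mem_nhds hc₀)
    have h1 : (fun c => s (F c)) ⁻¹' W ∈ 𝓝 c₀ :=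
      hcA (show W ∈ 𝓝 (s (F c₀)) by rw [hfix]; exact hWnhds)
    filter_upwards [h1, hWnhds, hW₀o.mem_nhds hc₀] with c h1c h2c h3c
    exact ⟨h3c, hWinj h1c h2c (hsec _ h3c)⟩
  have hDc : IsOpen (W₀ \ D) := by
    rw [isOpen_iff_mem_nhds]
    rintro c₀ ⟨hc₀, hnfix⟩
    have hne : s (F c₀) ≠ c₀ := fun h => hnfix ⟨hc₀, h⟩
    obtain ⟨U₁, U₂, hU₁, hU₂, hm₁, hm₂, hdis⟩ := t2_separation hne
    have hcA : ContinuousAt (fun c => s (F c)) c₀ := hg.continuousAt (hW₀o.mem_nhds hc₀)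
    have h1 : (fun c => s (F c)) ⁻¹' U₁ ∈ 𝓝 c₀ := hcA (hU₁.mem_nhds hm₁)
    filter_upwards [h1, hU₂.mem_nhds hm₂, hW₀o.mem_nhds hc₀] with c h1c h2c h3c
    exact ⟨h3c, fun hcD => (hdis.ne_of_mem h1c h2c) hcD.2⟩
  -- C is covered by the disjoint opens D and W₀ \ D
  have hCD : C ⊆ D ∪ (W₀ \ D) := fun c hc => by
    by_cases h : c ∈ D
    · exact Or.inl h
    · exact Or.inr ⟨hmap hc, h⟩
  have hdisj : Disjoint D (W₀ \ D) := disjoint_sdiff_right.mono_left le_rfl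
  have hsub : C ⊆ D := hC.subset_left_of_subset_union hDo hDc hdisj hCD ⟨e, heC, hmap heC, he⟩
  exact fun c hc => (hsub hc).2

lemma lift_unique [T2Space E] {A : Type*} [TopologicalSpace A] [PreconnectedSpace A]
    [LocallyConnectedSpace A]
    (hF : GoodCover F) (hFc : Continuous F) (hinj : LocInj F)
    {g₁ g₂ : A → E} (h₁ : Continuous g₁) (h₂ : Continuous g₂)
    (hcomp : ∀ a, F (g₁ a) = F (g₂ a)) {a₀ : A} (heq : g₁ a₀ = g₂ a₀) : g₁ = g₂ := by
  have hclopen : IsClopen {a | g₁ a = g₂ a} := by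
    constructor
    · exact isClosed_eq h₁ h₂
    · rw [isOpen_iff_mem_nhds]
      intro a ha
      have ha' : g₁ a = g₂ a := ha
      obtain ⟨V, hVo, hVmem, hVsec⟩ := hF (F (g₁ a))
      obtain ⟨s, hs, hssec, hse⟩ := hVsec (g₁ a) hVmem
      have hpre : (g₁ ⁻¹' (F ⁻¹' V)) ∩ (g₂ ⁻¹' (F ⁻¹' V)) ∈ 𝓝 a := by
        refine Filter.inter_mem ?_ ?_
        · exact h₁.continuousAt (hFc.continuousAt (hVo.mem_nhds hVmem))
        · exact h₂.continuousAt (hFc.continuousAt (by rw [← ha'] at *; exact hVo.mem_nhds hVmem))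
      obtain ⟨N, hNsub, hNo, hNa, hNconn⟩ :=
        locallyConnectedSpace_iff_subsets_isOpen_isConnected.mp ‹LocallyConnectedSpace A› a _ hpre
      have hC : IsPreconnected (g₁ '' N ∪ g₂ '' N) := by
        refine IsPreconnected.union (g₁ a) ⟨a, hNa, rfl⟩ ⟨a, hNa, ha'.symm⟩ ?_ ?_
        · exact hNconn.isPreconnected.image _ (h₁.continuousOn)
        · exact hNconn.isPreconnected.image _ (h₂.continuousOn)
      have hmap : Set.MapsTo F (g₁ '' N ∪ g₂ '' N) V := by
        rintro c (⟨b, hb, rfl⟩ | ⟨b, hb, rfl⟩)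
        · exact (hNsub hb).1
        · exact (hNsub hb).2
      have habs := absorb hFc hinj hVo hs hssec hC hmap (e := g₁ a) (Or.inl ⟨a, hNa, rfl⟩) hse
      filter_upwards [hNo.mem_nhds hNa] with b hb
      have e₁ : s (F (g₁ b)) = g₁ b := habs _ (Or.inl ⟨b, hb, rfl⟩)
      have e₂ : s (F (g₂ b)) = g₂ b := habs _ (Or.inr ⟨b, hb, rfl⟩)
      show g₁ b = g₂ b
      rw [← e₁, ← e₂, hcomp b]
  funext a
  have := hclopen.eq_univ (s := {a | g₁ a = g₂ a}) ⟨a₀, heq⟩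
  exact (this ▸ mem_univ a : a ∈ {a | g₁ a = g₂ a})



lemma isPreconnected_ball_I (a : I) (ε : ℝ) : IsPreconnected (Metric.ball a ε) := by
  rw [← Topology.IsInducing.subtypeVal.isPreconnected_image]
  have himg : Subtype.val '' Metric.ball a ε = Metric.ball (a : ℝ) ε ∩ Icc 0 1 := by
    ext y
    constructor
    · rintro ⟨b, hb, rfl⟩
      exact ⟨by rwa [Metric.mem_ball, ← Subtype.dist_eq], b.2⟩
    · rintro ⟨h1, h2⟩
      exact ⟨⟨y, h2⟩, by rwa [Metric.mem_ball, Subtype.dist_eq], rfl⟩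
  rw [himg]
  exact ((convex_ball _ _).inter (convex_Icc _ _)).isPreconnected

theorem square_lift [T2Space E] (hF : GoodCover F) (hFc : Continuous F) (hinj : LocInj F)
    {H : I × I → X} (hH : Continuous H) {β : I → E} (hβ : Continuous β)
    (hβ0 : ∀ b, F (β b) = H (b, 0)) :
    ∃ K : I × I → E, Continuous K ∧ (∀ p, F (K p) = H p) ∧ ∀ b, K (b, 0) = β b := by
  classical
  set T : Set ℝ := {t | t ∈ Icc (0:ℝ) 1 ∧ ∃ K : I × I → E, Continuous K ∧
    (∀ b u : I, (u:ℝ) ≤ t → F (K (b, u)) = H (b, u)) ∧ ∀ b, K (b, 0) = β b} with hTdef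
  have hT0 : (0:ℝ) ∈ T := by
    refine ⟨⟨le_refl 0, zero_le_one⟩, fun p => β p.1, hβ.comp continuous_fst, ?_, fun b => rfl⟩
    intro b u hu
    have hu0 : u = 0 := Subtype.ext (le_antisymm hu u.2.1)
    rw [hu0]
    exact hβ0 b
  have hTdown : ∀ t ∈ T, ∀ t' ∈ Icc (0:ℝ) 1, t' ≤ t → t' ∈ T := by
    rintro t ⟨ht1, K, hK, hKl, hK0⟩ t' ht' hle
    exact ⟨ht', K, hK, fun b u hu => hKl b u (hu.trans hle), hK0⟩
  have step : ∀ c ∈ Icc (0:ℝ) 1, ∃ δ > 0, ∀ t ∈ T, |t - c| ≤ δ → min 1 (c + δ) ∈ T := by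
    intro c hc
    set cI : I := ⟨c, hc⟩ with hcIdef
    choose V hVo hVmem hVsec using fun a : I => hF (H (a, cI))
    have hnhds : ∀ a : I, ∃ ε > 0, ∀ b u : I, dist b a < ε → |(u:ℝ) - c| < ε →
        H (b, u) ∈ V a := by
      intro a
      have hmem : H ⁻¹' (V a) ∈ 𝓝 (a, cI) :=
        hH.continuousAt.preimage_mem_nhds ((hVo a).mem_nhds (hVmem a))
      obtain ⟨ε, hε, hball⟩ := Metric.mem_nhds_iff.mp hmem
      refine ⟨ε, hε, fun b u h1 h2 => hball ?_⟩
      rw [Metric.mem_ball, Prod.dist_eq]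
      refine max_lt h1 ?_
      rw [Subtype.dist_eq, Real.dist_eq]
      exact h2
    choose ε hε key using hnhds
    obtain ⟨A, hA⟩ := isCompact_univ.elim_nhds_subcover (fun a : I => Metric.ball a (ε a))
      (fun a _ => Metric.ball_mem_nhds a (hε a))
    have hAne : A.Nonempty := by
      rcases mem_iUnion₂.mp (hA.2 (mem_univ 0)) with ⟨a, ha, -⟩
      exact ⟨a, ha⟩
    set δ : ℝ := A.inf' hAne ε / 2 with hδdef
    have hinf : 0 < A.inf' hAne ε := by
      rw [Finset.lt_inf'_iff]
      exact fun a _ => hε a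
    have hδpos : 0 < δ := by rw [hδdef]; linarith
    have hδlt : ∀ a ∈ A, δ < ε a := by
      intro a ha
      have h1 : A.inf' hAne ε ≤ ε a := Finset.inf'_le ε ha
      rw [hδdef]; linarith
    refine ⟨δ, hδpos, ?_⟩
    intro t htT htc
    have ht01 : t ∈ Icc (0:ℝ) 1 := htT.1
    set tI : I := ⟨t, ht01⟩ with htIdef
    obtain ⟨-, K, hK, hKl, hK0⟩ := htT
    have htc' := abs_le.mp htc
    set cp : ℝ := min 1 (c + δ) with hcpdef
    have hcp0 : (0:ℝ) ≤ cp := le_min zero_le_one (by linarith [hc.1])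
    have hcp1 : cp ≤ 1 := min_le_left _ _
    have hcpcδ : cp ≤ c + δ := min_le_right _ _
    have htcp : t ≤ cp := le_min ht01.2 (by linarith [htc'.2])
    have htzone : ∀ a ∈ A, |(tI : ℝ) - c| < ε a := fun a ha => lt_of_le_of_lt htc (hδlt a ha)
    have hanchor : ∀ a ∈ A, F (K (a, tI)) ∈ V a := by
      intro a ha
      rw [hKl a tI le_rfl]
      exact key a a tI (by rw [dist_self]; exact hε a) (htzone a ha)
    have hsecEx : ∀ a : I, ∃ s : X → E, a ∈ A →
        ContinuousOn s (V a) ∧ (∀ y ∈ V a, F (s y) = y) ∧ s (F (K (a, tI))) = K (a, tI) := by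
      intro a
      by_cases ha : a ∈ A
      · obtain ⟨s, h1, h2, h3⟩ := hVsec a _ (hanchor a ha)
        exact ⟨s, fun _ => ⟨h1, h2, h3⟩⟩
      · exact ⟨fun _ => K (a, tI), fun h => absurd h ha⟩
    choose sec hsecP using hsecEx
    have hline : ∀ a ∈ A, ∀ b : I, dist b a < ε a → sec a (H (b, tI)) = K (b, tI) := by
      intro a ha b hb
      obtain ⟨hs1, hs2, hs3⟩ := hsecP a ha
      have hpc : IsPreconnected ((fun b : I => K (b, tI)) '' Metric.ball a (ε a)) :=
        (isPreconnected_ball_I a (ε a)).image _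
          ((hK.comp (continuous_id.prodMk continuous_const)).continuousOn)
      have hmapC : Set.MapsTo F ((fun b : I => K (b, tI)) '' Metric.ball a (ε a)) (V a) := by
        rintro - ⟨b', hb', rfl⟩
        rw [hKl b' tI le_rfl]
        exact key a b' tI hb' (htzone a ha)
      have habs := absorb hFc hinj (hVo a) hs1 hs2 hpc hmapC
        (e := K (a, tI)) ⟨a, Metric.mem_ball_self (hε a), rfl⟩ hs3
      have hres := habs (K (b, tI)) ⟨b, hb, rfl⟩
      rwa [hKl b tI le_rfl] at hres
    have hmemI : ∀ r : ℝ, max t (min r cp) ∈ Icc (0:ℝ) 1 := fun r =>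
      ⟨le_trans ht01.1 (le_max_left _ _), max_le ht01.2 (le_trans (min_le_right _ _) hcp1)⟩
    set ρ : ℝ → I := fun r => ⟨max t (min r cp), hmemI r⟩ with hρdef
    have hρcont : Continuous ρ :=
      (continuous_const.max (continuous_id.min continuous_const)).subtype_mk _
    have hρzone : ∀ a ∈ A, ∀ r : ℝ, |((ρ r : I) : ℝ) - c| < ε a := by
      intro a ha r
      refine lt_of_le_of_lt ?_ (hδlt a ha)
      rw [abs_le]
      constructor
      · have h1 : t ≤ ((ρ r : I) : ℝ) := le_max_left _ _
        linarith [htc'.1]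
      · have h1 : ((ρ r : I) : ℝ) ≤ cp := max_le htcp (min_le_right _ _)
        linarith
    have hρt : ρ t = tI := Subtype.ext (by
      show max t (min t cp) = t
      rw [min_eq_left htcp, max_self])
    have hρid : ∀ u : I, t ≤ (u:ℝ) → (u:ℝ) ≤ cp → ρ (u:ℝ) = u := fun u h1 h2 =>
      Subtype.ext (by show max t (min (u:ℝ) cp) = (u:ℝ); rw [min_eq_left h2, max_eq_right h1])
    have hoverlap : ∀ a ∈ A, ∀ a' ∈ A, ∀ b : I, dist b a < ε a → dist b a' < ε a' →
        ∀ r : ℝ, sec a (H (b, ρ r)) = sec a' (H (b, ρ r)) := by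
      intro a ha a' ha' b hba hba'
      obtain ⟨hs1, hs2, hs3⟩ := hsecP a ha
      obtain ⟨hs1', hs2', hs3'⟩ := hsecP a' ha'
      have hmem : ∀ r : ℝ, H (b, ρ r) ∈ V a := fun r => key a b (ρ r) hba (hρzone a ha r)
      have hmem' : ∀ r : ℝ, H (b, ρ r) ∈ V a' := fun r => key a' b (ρ r) hba' (hρzone a' ha' r)
      have hco : Continuous fun r : ℝ => H (b, ρ r) :=
        hH.comp (continuous_const.prodMk hρcont)
      have h1 : Continuous fun r : ℝ => sec a (H (b, ρ r)) := hs1.comp_continuous hco hmem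
      have h2 : Continuous fun r : ℝ => sec a' (H (b, ρ r)) := hs1'.comp_continuous hco hmem'
      have heqt : (fun r : ℝ => sec a (H (b, ρ r))) t = (fun r : ℝ => sec a' (H (b, ρ r))) t := by
        simp only [hρt]
        rw [hline a ha b hba, hline a' ha' b hba']
      have hcomp : ∀ r : ℝ, F (sec a (H (b, ρ r))) = F (sec a' (H (b, ρ r))) := fun r => by
        rw [hs2 _ (hmem r), hs2' _ (hmem' r)]
      have hu := lift_unique hF hFc hinj h1 h2 hcomp heqt
      exact fun r => congrFun hu r
    have hchoice : ∀ b : I, ∃ a, a ∈ A ∧ dist b a < ε a := by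
      intro b
      rcases mem_iUnion₂.mp (hA.2 (mem_univ b)) with ⟨a, ha, hball⟩
      exact ⟨a, ha, Metric.mem_ball.mp hball⟩
    choose ι hιA hιb using hchoice
    set K' : I × I → E := fun p =>
      if ((p.2 : I) : ℝ) ≤ t then K p else sec (ι p.1) (H (p.1, ρ (p.2 : ℝ))) with hK'def
    have hK'loc : ∀ a ∈ A, ∀ p : I × I, dist p.1 a < ε a →
        K' p = if ((p.2 : I) : ℝ) ≤ t then K p else sec a (H (p.1, ρ (p.2 : ℝ))) := by
      intro a ha p hp
      by_cases h : ((p.2 : I) : ℝ) ≤ t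
      · simp only [hK'def, if_pos h]
      · simp only [hK'def, if_neg h]
        exact hoverlap (ι p.1) (hιA p.1) a ha p.1 (hιb p.1) hp (p.2 : ℝ)
    have hK'cont : Continuous K' := by
      rw [continuous_iff_continuousAt]
      intro p
      have haA := hιA p.1
      obtain ⟨hs1, hs2, hs3⟩ := hsecP (ι p.1) haA
      have hSopen : IsOpen (Metric.ball (ι p.1) (ε (ι p.1)) ×ˢ (univ : Set I)) :=
        Metric.isOpen_ball.prod isOpen_univ
      have hSmem : Metric.ball (ι p.1) (ε (ι p.1)) ×ˢ (univ : Set I) ∈ 𝓝 p :=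
        hSopen.mem_nhds ⟨hιb p.1, mem_univ _⟩
      refine ContinuousOn.continuousAt ?_ hSmem
      have hform : ContinuousOn
          (fun q : I × I => if ((q.2 : I) : ℝ) ≤ t then K q else sec (ι p.1) (H (q.1, ρ (q.2 : ℝ))))
          (Metric.ball (ι p.1) (ε (ι p.1)) ×ˢ (univ : Set I)) := by
        apply ContinuousOn.if
        · rintro ⟨q1, q2⟩ ⟨hq, hqf⟩
          have hfr : frontier {q : I × I | ((q.2 : I) : ℝ) ≤ t} ⊆ {q : I × I | ((q.2 : I) : ℝ) = t} :=
            frontier_le_subset_eq (continuous_subtype_val.comp continuous_snd) continuous_const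
          have hq2 : q2 = tI := Subtype.ext (hfr hqf)
          have hrw : ρ ((q2 : I) : ℝ) = tI := by rw [hq2]; exact hρt
          show K (q1, q2) = sec (ι p.1) (H (q1, ρ ((q2 : I) : ℝ)))
          rw [hrw, hline (ι p.1) haA q1 hq.1, hq2]
        · exact hK.continuousOn.mono (fun q hq => trivial)
        · refine ContinuousOn.mono ?_ (inter_subset_left)
          refine hs1.comp ?_ ?_
          · exact (hH.comp (continuous_fst.prodMk
              (hρcont.comp (continuous_subtype_val.comp continuous_snd)))).continuousOn
          · intro q hq
            exact key (ι p.1) q.1 (ρ (q.2 : ℝ)) hq.1 (hρzone (ι p.1) haA (q.2 : ℝ))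
      exact hform.congr (fun q hq => hK'loc (ι p.1) haA q hq.1)
    refine ⟨⟨hcp0, hcp1⟩, K', hK'cont, ?_, ?_⟩
    · intro b u hu
      by_cases h : (u : ℝ) ≤ t
      · simp only [hK'def, if_pos h]
        exact hKl b u h
      · push_neg at h
        simp only [hK'def, if_neg (not_le.mpr h)]
        rw [hρid u h.le hu]
        refine (hsecP (ι b) (hιA b)).2.1 _ ?_
        refine key (ι b) b u (hιb b) ?_
        refine lt_of_le_of_lt ?_ (hδlt (ι b) (hιA b))
        rw [abs_le]
        exact ⟨by linarith [htc'.1], by linarith⟩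
    · intro b
      have h0 : (((0:I) : I) : ℝ) ≤ t := ht01.1
      simp only [hK'def]
      rw [if_pos h0]
      exact hK0 b
  -- main argument
  have hbdd : BddAbove T := ⟨1, fun t ht => ht.1.2⟩
  have hne : T.Nonempty := ⟨0, hT0⟩
  set c := sSup T with hcdef
  have hc0 : 0 ≤ c := le_csSup hbdd hT0
  have hc1 : c ≤ 1 := csSup_le hne (fun t ht => ht.1.2)
  obtain ⟨δ, hδpos, hstep⟩ := step c ⟨hc0, hc1⟩
  set cp : ℝ := min 1 (c + δ) with hcpdef
  have hcpIcc : cp ∈ Icc (0:ℝ) 1 := ⟨le_min zero_le_one (by linarith), min_le_left _ _⟩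
  have hcpT : cp ∈ T := by
    rcases exists_lt_of_lt_csSup hne (show c - δ < c by linarith) with ⟨t, htT, htgt⟩
    by_cases hge : cp ≤ t
    · exact hTdown t htT cp hcpIcc hge
    · push_neg at hge
      have htle : t ≤ c := le_csSup hbdd htT
      exact hstep t htT (abs_le.mpr ⟨by linarith, by linarith⟩)
  have hcple : cp ≤ c := le_csSup hbdd hcpT
  have hceq : c = 1 := by
    by_contra h
    have hlt : c < 1 := lt_of_le_of_ne hc1 h
    have : c < cp := lt_min hlt (by linarith)
    linarith
  have h1T : (1:ℝ) ∈ T := by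
    have : cp = 1 := by rw [hcpdef, hceq]; exact min_eq_left (by linarith)
    rwa [this] at hcpT
  obtain ⟨-, K, hK, hKl, hK0⟩ := h1T
  exact ⟨K, hK, fun p => hKl p.1 p.2 p.2.2.2, hK0⟩



section Rickman

variable {Y : Type*} [TopologicalSpace Y] [T2Space Y]

/-- The combined "sheets" lemma: the key geometric construction of Rickman's lemma. -/
lemma sheets {G Q P : Set Y} (hG : IsOpen G) {f : Y → Y}
    (hf : IsLocalHomeomorphOn f G) [LocallyPathConnectedSpace Q]
    {x₀ : Y} (hx₀ : x₀ ∈ G ∩ f ⁻¹' Q) (hP : P = connectedComponentIn (G ∩ f ⁻¹' Q) x₀)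
    (hPcl : IsCompact (closure P)) (hPG : closure P ⊆ G)
    (hPQ : ∀ z ∈ P, f z ∈ Q)
    (FP : ↥P → ↥Q) (hFP : ∀ e : ↥P, (FP e : Y) = f (e : Y))
    {q : Y} (hq : q ∈ Q) :
    ∃ V : Set ↥Q, IsOpen V ∧ IsPathConnected V ∧ (⟨q, hq⟩ : ↥Q) ∈ V ∧
      ∀ e : ↥P, FP e ∈ V → ∃ (Wa : Set Y) (s : ↥Q → ↥P),
        IsOpen Wa ∧ (e : Y) ∈ Wa ∧ Set.InjOn f Wa ∧
        (∀ B ⊆ Wa, IsOpen B → IsOpen (f '' B)) ∧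
        ContinuousOn s V ∧ (∀ y ∈ V, FP (s y) = y) ∧ (∀ y ∈ V, ((s y : ↥P) : Y) ∈ Wa) ∧
        (∀ w : ↥P, (w : Y) ∈ Wa → s (FP w) = w) := by
  classical
  have hfc : ContinuousOn f G := hf.continuousOn
  set S : Set Y := G ∩ f ⁻¹' Q with hSdef
  have hPS : P ⊆ S := hP ▸ connectedComponentIn_subset _ _
  have hrel : ∀ z, z ∈ closure P → z ∈ S → z ∈ P := by
    intro z hz1 hz2
    have hpre : IsPreconnected (insert z P) := by
      have hPconn : IsConnected P := hP ▸ (isConnected_connectedComponentIn_iff.mpr hx₀)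
      refine hPconn.isPreconnected.subset_closure (subset_insert _ _) ?_
      intro w hw
      rcases hw with rfl | hw
      · exact hz1
      · exact subset_closure hw
    have hsub : insert z P ⊆ connectedComponentIn S x₀ := by
      refine hpre.subset_connectedComponentIn ?_ ?_
      · refine mem_insert_iff.mpr (Or.inr ?_)
        show x₀ ∈ P
        rw [hP]
        exact mem_connectedComponentIn hx₀
      · intro w hw
        rcases hw with rfl | hw
        · exact hz2
        · exact hPS hw
    rw [← hP] at hsub
    exact hsub (mem_insert _ _)
  -- sheet data around every point of G
  have hsheetEx : ∀ z : Y, ∃ (W τ : Set Y) (sg : Y → Y), z ∈ G →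
      IsOpen W ∧ z ∈ W ∧ W ⊆ G ∧ IsOpen τ ∧ (∀ w ∈ W, f w ∈ τ) ∧ Set.InjOn f W ∧
      ContinuousOn sg τ ∧ (∀ y ∈ τ, f (sg y) = y) ∧ (∀ y ∈ τ, sg y ∈ W) ∧
      (∀ w ∈ W, sg (f w) = w) ∧ (∀ B ⊆ W, IsOpen B → IsOpen (f '' B)) := by
    intro z
    by_cases hz : z ∈ G
    · obtain ⟨φ, hzφ, hfφ⟩ := hf z hz
      set ψ := φ.restrOpen G hG with hψdef
      have hψs : ψ.source = φ.source ∩ G := φ.restrOpen_source G hG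
      have hcoe : ∀ w : Y, f w = ψ w := fun w => by rw [hfφ]; rfl
      refine ⟨ψ.source, ψ.target, ψ.symm, fun _ => ⟨ψ.open_source, ?_, ?_, ψ.open_target,
        ?_, ?_, ψ.continuousOn_symm, ?_, fun y hy => ψ.map_target hy, ?_, ?_⟩⟩
      · rw [hψs]; exact ⟨hzφ, hz⟩
      · rw [hψs]; exact inter_subset_right
      · intro w hw; rw [hcoe]; exact ψ.map_source hw
      · intro w hw w' hw' hww'
        rw [hcoe w, hcoe w'] at hww'
        exact ψ.injOn hw hw' hww'
      · intro y hy; rw [hcoe]; exact ψ.right_inv hy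
      · intro w hw; rw [hcoe]; exact ψ.left_inv hw
      · intro B hB hBo
        have : f '' B = ψ '' B := by
          ext y; constructor <;> rintro ⟨w, hw, rfl⟩
          · exact ⟨w, hw, (hcoe w).symm⟩
          · exact ⟨w, hw, hcoe w⟩
        rw [this]
        exact ψ.isOpen_image_of_subset_source hBo hB
    · exact ⟨∅, ∅, id, fun h => absurd h hz⟩
  choose W τ sg hsheet using hsheetEx
  -- the fiber
  set Φ : Set Y := closure P ∩ f ⁻¹' {q} with hΦdef
  have hΦP : Φ ⊆ P := fun z hz => hrel z hz.1 ⟨hPG hz.1, by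
    have : f z = q := hz.2
    rw [mem_preimage, this]; exact hq⟩
  have hΦG : Φ ⊆ G := fun z hz => hPG hz.1
  have hΦcl : IsClosed Φ :=
    (hfc.mono hPG).preimage_isClosed_of_isClosed isClosed_closure isClosed_singleton
  have hΦcp : IsCompact Φ := hPcl.of_isClosed_subset hΦcl inter_subset_left
  have hcover : Φ ⊆ ⋃ z ∈ Φ, W z := fun z hz =>
    mem_biUnion hz (hsheet z (hΦG hz)).2.1
  obtain ⟨Φ₀, hΦ₀sub, hΦ₀fin, hΦ₀cov⟩ := hΦcp.elim_finite_subcover_image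
    (fun z hz => (hsheet z (hΦG hz)).1) hcover
  have hΦfin : Φ.Finite := by
    refine hΦ₀fin.subset ?_
    intro z hz
    rcases mem_iUnion₂.mp (hΦ₀cov hz) with ⟨z', hz', hmem⟩
    have hz'Φ : z' ∈ Φ := hΦ₀sub hz'
    have hinj := (hsheet z' (hΦG hz'Φ)).2.2.2.2.2.1
    have hfz : f z = f z' := by
      have h1 : f z = q := hz.2
      have h2 : f z' = q := hz'Φ.2
      rw [h1, h2]
    have : z = z' := hinj hmem (hsheet z' (hΦG hz'Φ)).2.1 hfz
    rwa [this]
  set U : Set Y := ⋃ z ∈ Φ, W z with hUdef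
  have hUo : IsOpen U := isOpen_biUnion fun z hz => (hsheet z (hΦG hz)).1
  set C : Set Y := closure P \ U with hCdef
  have hCcp : IsCompact C := hPcl.diff hUo
  have hqC : q ∉ f '' C := by
    rintro ⟨z, hz, hfz⟩
    have hzΦ : z ∈ Φ := ⟨hz.1, by rw [mem_preimage, hfz]; exact rfl⟩
    exact hz.2 (hcover hzΦ)
  have hfC : IsCompact (f '' C) := hCcp.image_of_continuousOn
    (hfc.mono (fun z hz => hPG hz.1))
  set V₀ : Set Y := (f '' C)ᶜ ∩ ⋂ z ∈ Φ, τ z with hV₀def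
  have hV₀o : IsOpen V₀ := by
    refine hfC.isClosed.isOpen_compl.inter ?_
    exact hΦfin.isOpen_biInter fun z hz => (hsheet z (hΦG hz)).2.2.2.1
  have hqV₀ : q ∈ V₀ := by
    refine ⟨hqC, ?_⟩
    refine mem_iInter₂.mpr fun z hz => ?_
    have hfz : f z = q := hz.2
    rw [← hfz]
    exact (hsheet z (hΦG hz)).2.2.2.2.1 z (hsheet z (hΦG hz)).2.1
  have hprop : ∀ z ∈ P, f z ∈ V₀ → z ∈ U := by
    intro z hzP hzV
    by_contra h
    exact hzV.1 ⟨z, ⟨subset_closure hzP, h⟩, rfl⟩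
  -- now in the subtype
  set V₁ : Set ↥Q := Subtype.val ⁻¹' V₀ with hV₁def
  have hV₁o : IsOpen V₁ := hV₀o.preimage continuous_subtype_val
  have hqV₁ : (⟨q, hq⟩ : ↥Q) ∈ V₁ := hqV₀
  set V : Set ↥Q := pathComponentIn V₁ (⟨q, hq⟩ : ↥Q) with hVdef
  have hVo : IsOpen V := hV₁o.pathComponentIn _
  have hVpc : IsPathConnected V := isPathConnected_pathComponentIn hqV₁
  have hVmem : (⟨q, hq⟩ : ↥Q) ∈ V := mem_pathComponentIn_self hqV₁
  have hVV₀ : ∀ y : ↥Q, y ∈ V → (y : Y) ∈ V₀ := by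
    intro y hy
    have h1 : y ∈ V₁ := pathComponentIn_subset hy
    exact h1
  refine ⟨V, hVo, hVpc, hVmem, ?_⟩
  intro e heV
  have heV₀ : f (e : Y) ∈ V₀ := hFP e ▸ hVV₀ _ heV
  have heU : (e : Y) ∈ U := hprop _ e.2 heV₀
  rcases mem_iUnion₂.mp heU with ⟨z₀, hz₀Φ, heW⟩
  have hz₀G : z₀ ∈ G := hΦG hz₀Φ
  obtain ⟨hWo, hz₀W, hWG, hτo, hWτ, hWinj, hσc, hσf, hσW, hσfw, himg⟩ := hsheet z₀ hz₀G
  have hVτ : ∀ y : ↥Q, y ∈ V → (y : Y) ∈ τ z₀ := fun y hy =>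
    mem_iInter₂.mp (hVV₀ y hy).2 z₀ hz₀Φ
  -- the section lands in P
  have hσP : ∀ y : ↥Q, y ∈ V → sg z₀ (y : Y) ∈ P := by
    intro y hy
    set D : Set Y := (fun y : ↥Q => sg z₀ (y : Y)) '' V with hDdef
    have hDpc : IsPreconnected D := by
      refine hVpc.isConnected.isPreconnected.image _ ?_
      exact hσc.comp continuous_subtype_val.continuousOn (fun y' hy' => hVτ y' hy')
    have hDS : D ⊆ S := by
      rintro - ⟨y', hy', rfl⟩
      refine ⟨hWG (hσW _ (hVτ y' hy')), ?_⟩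
      rw [mem_preimage, hσf _ (hVτ y' hy')]
      exact y'.2
    have heD : (e : Y) ∈ D := ⟨FP e, heV, by
      show sg z₀ ((FP e : ↥Q) : Y) = (e : Y)
      rw [hFP e]
      exact hσfw _ heW⟩
    have hPe : P = connectedComponentIn S (e : Y) := by
      have h1 : (e : Y) ∈ connectedComponentIn S x₀ := by rw [← hP]; exact e.2
      exact hP.trans (connectedComponentIn_eq h1)
    have : D ⊆ P := by
      rw [hPe]
      exact hDpc.subset_connectedComponentIn heD hDS
    exact this ⟨y, hy, rfl⟩
  set s : ↥Q → ↥P := fun y => if h : sg z₀ (y : Y) ∈ P then ⟨sg z₀ (y : Y), h⟩ else e with hsdef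
  have hsval : ∀ y : ↥Q, y ∈ V → ((s y : ↥P) : Y) = sg z₀ (y : Y) := by
    intro y hy
    rw [hsdef]
    simp only [dif_pos (hσP y hy)]
  refine ⟨W z₀, s, hWo, heW, hWinj, himg, ?_, ?_, ?_, ?_⟩
  · rw [Topology.IsInducing.subtypeVal.continuousOn_iff]
    refine (hσc.comp continuous_subtype_val.continuousOn (fun y' hy' => hVτ y' hy')).congr ?_
    intro y hy
    exact hsval y hy
  · intro y hy
    refine Subtype.ext ?_
    rw [hFP, hsval y hy]
    exact hσf _ (hVτ y hy)
  · intro y hy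
    rw [hsval y hy]
    exact hσW _ (hVτ y hy)
  · intro w hw
    have h1 : sg z₀ ((FP w : ↥Q) : Y) = (w : Y) := by rw [hFP]; exact hσfw _ hw
    have h2 : sg z₀ ((FP w : ↥Q) : Y) ∈ P := by rw [h1]; exact w.2
    have h3 : s (FP w) = ⟨sg z₀ ((FP w : ↥Q) : Y), h2⟩ := by
      rw [hsdef]
      exact dif_pos h2
    refine Subtype.ext ?_
    rw [h3]
    exact h1

end Rickman



end Stmt17

open Stmt17 in
theorem stmt_17 (n : ℕ) (G : Set (EuclideanSpace ℝ (Fin n))) (hG : IsOpen G)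
    (f : EuclideanSpace ℝ (Fin n) → EuclideanSpace ℝ (Fin n))
    (hf : IsLocalHomeomorphOn f G)
    (Q : Set (EuclideanSpace ℝ (Fin n)))
    (hQsc : SimplyConnectedSpace Q) (hQlpc : LocPathConnectedSpace Q)
    (P : Set (EuclideanSpace ℝ (Fin n)))
    (hP : ∃ x ∈ G ∩ f ⁻¹' Q, P = connectedComponentIn (G ∩ f ⁻¹' Q) x)
    (hPcl : IsCompact (closure P)) (hPG : closure P ⊆ G) :
    Set.BijOn f P Q ∧ ContinuousOn f P ∧
      ∃ g : EuclideanSpace ℝ (Fin n) → EuclideanSpace ℝ (Fin n),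
        ContinuousOn g Q ∧ (∀ x ∈ P, g (f x) = x) ∧ ∀ y ∈ Q, f (g y) = y := by
  classical
  haveI := hQsc
  haveI : LocallyPathConnectedSpace Q := hQlpc
  obtain ⟨x₀, hx₀, hPdef⟩ := hP
  have hPsub : P ⊆ G ∩ f ⁻¹' Q := hPdef ▸ connectedComponentIn_subset _ _
  have hPQ : ∀ z ∈ P, f z ∈ Q := fun z hz => (hPsub hz).2
  have hPsubG : P ⊆ G := fun z hz => (hPsub hz).1
  set FP : ↥P → ↥Q := fun e => ⟨f (e : EuclideanSpace ℝ (Fin n)), hPQ _ e.2⟩ with hFPdef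
  have hFP : ∀ e : ↥P, ((FP e : ↥Q) : EuclideanSpace ℝ (Fin n)) = f (e : EuclideanSpace ℝ (Fin n)) := fun e => rfl
  have hfcP : ContinuousOn f P := hf.continuousOn.mono hPsubG
  have hFPc : Continuous FP := by
    refine Continuous.subtype_mk ?_ _
    exact continuousOn_iff_continuous_restrict.mp hfcP
  -- local injectivity
  have hinjF : LocInj FP := by
    intro e
    obtain ⟨φ, hφ, hfφ⟩ := hf (e : EuclideanSpace ℝ (Fin n)) (hPsubG e.2)
    refine ⟨Subtype.val ⁻¹' φ.source,
      (φ.open_source.preimage continuous_subtype_val).mem_nhds hφ, ?_⟩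
    intro a ha b hb hab
    have h1 : f (a : EuclideanSpace ℝ (Fin n)) = f (b : EuclideanSpace ℝ (Fin n)) := by
      have := congrArg (Subtype.val : ↥Q → EuclideanSpace ℝ (Fin n)) hab
      rwa [hFP, hFP] at this
    rw [hfφ] at h1
    exact Subtype.ext (φ.injOn ha hb h1)
  -- good cover
  have hGC : GoodCover FP := by
    intro x
    obtain ⟨V, hVo, hVpc, hVmem, hVsec⟩ := sheets hG hf hx₀ hPdef hPcl hPG hPQ FP hFP x.2
    refine ⟨V, hVo, by simpa using hVmem, ?_⟩
    intro e he
    obtain ⟨Wa, s, hWo, heW, hWinj, himg, hsc, hssec, hsW, hsleft⟩ := hVsec e he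
    exact ⟨s, hsc, hssec, hsleft e heW⟩
  -- local path connectedness of P
  haveI hlpcP : LocallyPathConnectedSpace ↥P := by
    constructor
    intro e
    rw [Filter.hasBasis_self]
    intro N hN
    obtain ⟨t, htN, hts⟩ := (mem_nhds_subtype P e N).mp hN
    obtain ⟨O, hOt, hOo, heO⟩ := mem_nhds_iff.mp htN
    obtain ⟨V, hVo, hVpc, hVmem, hVsec⟩ :=
      sheets hG hf hx₀ hPdef hPcl hPG hPQ FP hFP (hPQ _ e.2)
    have heV : FP e ∈ V := hVmem
    obtain ⟨Wa, s, hWo, heW, hWinj, himg, hsc, hssec, hsW, hsleft⟩ := hVsec e heV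
    set A : Set (EuclideanSpace ℝ (Fin n)) := Wa ∩ O with hAdef
    have hAo : IsOpen A := hWo.inter hOo
    have hfA : IsOpen (f '' A) := himg A inter_subset_left hAo
    set V' : Set ↥Q := pathComponentIn (V ∩ Subtype.val ⁻¹' (f '' A)) (FP e) with hV'def
    have hV'base : FP e ∈ V ∩ Subtype.val ⁻¹' (f '' A) :=
      ⟨heV, ⟨(e : EuclideanSpace ℝ (Fin n)), ⟨heW, heO⟩, (hFP e).symm⟩⟩
    have hV'o : IsOpen V' := (hVo.inter (hfA.preimage continuous_subtype_val)).pathComponentIn _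
    have hV'pc : IsPathConnected V' := isPathConnected_pathComponentIn hV'base
    have hV'mem : FP e ∈ V' := mem_pathComponentIn_self hV'base
    have hV'V : V' ⊆ V := pathComponentIn_subset.trans inter_subset_left
    set M : Set ↥P := s '' V' with hMdef
    have hMpc : IsPathConnected M := hV'pc.image' (hsc.mono hV'V)
    have hMN : M ⊆ N := by
      rintro - ⟨y, hy, rfl⟩
      have hyA : (y : EuclideanSpace ℝ (Fin n)) ∈ f '' A := (pathComponentIn_subset hy).2
      obtain ⟨w', hw'A, hw'⟩ := hyA
      have h1 : f ((s y : ↥P) : EuclideanSpace ℝ (Fin n)) = (y : EuclideanSpace ℝ (Fin n)) := by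
        rw [← hFP (s y)]
        exact congrArg Subtype.val (hssec y (hV'V hy))
      have h2 : ((s y : ↥P) : EuclideanSpace ℝ (Fin n)) = w' := hWinj (hsW y (hV'V hy)) hw'A.1 (by rw [h1, ← hw'])
      refine hts ?_
      show ((s y : ↥P) : EuclideanSpace ℝ (Fin n)) ∈ t
      rw [h2]
      exact hOt hw'A.2
    have hMnhds : M ∈ 𝓝 e := by
      have hopen : IsOpen (Subtype.val ⁻¹' A ∩ FP ⁻¹' V') :=
        (hAo.preimage continuous_subtype_val).inter (hV'o.preimage hFPc)
      have hmem : e ∈ Subtype.val ⁻¹' A ∩ FP ⁻¹' V' := ⟨⟨heW, heO⟩, hV'mem⟩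
      refine Filter.mem_of_superset (hopen.mem_nhds hmem) ?_
      rintro w ⟨hwA, hwV'⟩
      exact ⟨FP w, hwV', hsleft w hwA.1⟩
    exact ⟨M, hMnhds, hMpc, hMN⟩
  haveI hcsP : ConnectedSpace ↥P := by
    rw [← isConnected_iff_connectedSpace]
    exact hPdef ▸ isConnected_connectedComponentIn_iff.mpr hx₀
  haveI hpcsP : PathConnectedSpace ↥P := pathConnectedSpace_iff_connectedSpace.mpr hcsP
  -- the reparametrization ℝ → I
  set π : ℝ → unitInterval := fun r => Set.projIcc 0 1 zero_le_one r with hπdef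
  have hπc : Continuous π := continuous_projIcc
  have hπ0 : π 0 = 0 := by simp [hπdef]
  have hπval : ∀ u : unitInterval, π (u : ℝ) = u := fun u => Set.projIcc_val zero_le_one u
  -- surjectivity of FP
  have hsurj : ∀ y : ↥Q, ∃ e : ↥P, FP e = y := by
    intro y
    set e₀ : ↥P := ⟨x₀, hPdef ▸ mem_connectedComponentIn hx₀⟩ with he₀def
    obtain γ := PathConnectedSpace.somePath (FP e₀) y
    obtain ⟨K, hK, hKl, hK0⟩ := square_lift hGC hFPc hinjF
      (H := fun p => γ p.2) (γ.continuous.comp continuous_snd)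
      (β := fun _ => e₀) continuous_const (fun b => by simp)
    refine ⟨K (0, 1), ?_⟩
    have := hKl (0, 1)
    simpa using this
  -- injectivity of FP
  have hinj2 : ∀ e₁ e₂ : ↥P, FP e₁ = FP e₂ → e₁ = e₂ := by
    intro e₁ e₂ h12
    obtain σp := PathConnectedSpace.somePath e₁ e₂
    set p' : Path (FP e₁) (FP e₁) := (σp.map hFPc).cast rfl h12 with hp'def
    have hp'eq : ∀ u : unitInterval, p' u = FP (σp u) := fun u => rfl
    have hpq : Path.Homotopic p' (Path.refl (FP e₁)) :=
      (simply_connected_iff_paths_homotopic'.mp inferInstance).2 p' (Path.refl (FP e₁))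
    obtain ⟨Hh⟩ := hpq
    have hHc : Continuous fun p : unitInterval × unitInterval => Hh (p.1, p.2) := by
      exact Hh.continuous.comp (continuous_fst.prodMk continuous_snd)
    obtain ⟨K, hK, hKl, hK0⟩ := square_lift hGC hFPc hinjF
      (H := fun p => Hh (p.1, p.2)) hHc (β := fun _ => e₁) continuous_const
      (fun b => by
        show FP e₁ = Hh (b, 0)
        rw [Hh.eq_fst b (show (0 : unitInterval) ∈ ({0, 1} : Set unitInterval) by simp)]
        exact p'.source.symm)
    -- K(0, ·) = σp
    have hA : ∀ u : unitInterval, K (0, u) = σp u := by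
      have := lift_unique hGC hFPc hinjF
        (g₁ := fun r : ℝ => K (0, π r)) (g₂ := fun r : ℝ => σp (π r))
        (hK.comp (continuous_const.prodMk hπc)) (σp.continuous.comp hπc)
        (fun r => by
          show FP (K (0, π r)) = FP (σp (π r))
          rw [hKl (0, π r)]
          show Hh (0, π r) = FP (σp (π r))
          rw [Hh.apply_zero]
          rfl)
        (a₀ := 0) (by
          show K (0, π 0) = σp (π 0)
          rw [hπ0, hK0]
          exact σp.source.symm)
      intro u
      have := congrFun this (u : ℝ)
      rwa [hπval u] at this
    have hmem01 : (1 : unitInterval) ∈ ({0, 1} : Set unitInterval) := by simp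
    have hmem00 : (0 : unitInterval) ∈ ({0, 1} : Set unitInterval) := by simp
    have hπ1 : π 1 = 1 := by simpa using hπval 1
    have hB : ∀ b : unitInterval, K (b, 1) = K (0, 1) := by
      have := lift_unique hGC hFPc hinjF
        (g₁ := fun r : ℝ => K (π r, 1)) (g₂ := fun _ : ℝ => K (0, 1))
        (hK.comp (hπc.prodMk continuous_const)) continuous_const
        (fun r => by
          show FP (K (π r, 1)) = FP (K (0, 1))
          rw [hKl (π r, 1), hKl (0, 1)]
          show Hh (π r, 1) = Hh (0, 1)
          rw [Hh.eq_snd (π r) hmem01, Hh.eq_snd 0 hmem01])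
        (a₀ := 0) (by show K (π 0, 1) = K (0, 1); rw [hπ0])
      intro b
      have := congrFun this (b : ℝ)
      rwa [hπval b] at this
    have hC : ∀ u : unitInterval, K (1, u) = K (1, 1) := by
      have := lift_unique hGC hFPc hinjF
        (g₁ := fun r : ℝ => K (1, π r)) (g₂ := fun _ : ℝ => K (1, 1))
        (hK.comp (continuous_const.prodMk hπc)) continuous_const
        (fun r => by
          show FP (K (1, π r)) = FP (K (1, 1))
          rw [hKl (1, π r), hKl (1, 1)]
          show Hh (1, π r) = Hh (1, 1)
          rw [Hh.apply_one, Hh.apply_one]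
          rfl)
        (a₀ := 1) (by show K (1, π 1) = K (1, 1); rw [hπ1])
      intro u
      have := congrFun this (u : ℝ)
      rwa [hπval u] at this
    have h1 : K (0, 1) = e₂ := by rw [hA 1]; exact σp.target
    have h2 : K (1, 0) = e₁ := hK0 1
    have h3 : K (1, 0) = e₂ := by rw [hC 0, hB 1, h1]
    rw [← h2, h3]
  -- the continuous inverse
  set gI : ↥Q → ↥P := fun y => Classical.choose (hsurj y) with hgIdef
  have hgI : ∀ y, FP (gI y) = y := fun y => Classical.choose_spec (hsurj y)
  have hgIc : Continuous gI := by
    rw [continuous_iff_continuousAt]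
    intro y
    obtain ⟨V, hVo, hVmem, hVsec⟩ := hGC y
    obtain ⟨s, hsc, hssec, hse⟩ := hVsec (gI y) (by rw [hgI y]; exact hVmem)
    have hcongr : ∀ y' ∈ V, gI y' = s y' := fun y' hy' =>
      hinj2 _ _ (by rw [hgI y', hssec y' hy'])
    exact (hsc.congr hcongr).continuousAt (hVo.mem_nhds hVmem)
  refine ⟨⟨fun z hz => hPQ z hz, ?_, ?_⟩, hfcP, ?_⟩
  · intro a ha b hb hab
    have := hinj2 ⟨a, ha⟩ ⟨b, hb⟩ (Subtype.ext hab)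
    exact congrArg Subtype.val this
  · intro q hq
    obtain ⟨e, he⟩ := hsurj ⟨q, hq⟩
    exact ⟨e, e.2, congrArg Subtype.val he⟩
  · refine ⟨fun y => if h : y ∈ Q then ((gI ⟨y, h⟩ : ↥P) : EuclideanSpace ℝ (Fin n)) else y,
      ?_, ?_, ?_⟩
    · rw [continuousOn_iff_continuous_restrict]
      have hres : Q.domRestrict (fun y => if h : y ∈ Q then
          ((gI ⟨y, h⟩ : ↥P) : EuclideanSpace ℝ (Fin n)) else y) =
          fun y : ↥Q => ((gI y : ↥P) : EuclideanSpace ℝ (Fin n)) := by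
        funext y
        simp only [Set.domRestrict_apply, dif_pos y.2, Subtype.coe_eta]
      rw [hres]
      exact continuous_subtype_val.comp hgIc
    · intro x hx
      have hfx : f x ∈ Q := hPQ x hx
      have hgix : gI ⟨f x, hfx⟩ = ⟨x, hx⟩ := hinj2 _ _ (by rw [hgI ⟨f x, hfx⟩])
      simp only [dif_pos hfx, hgix]
    · intro y hy
      simp only [dif_pos hy]
      exact congrArg Subtype.val (hgI ⟨y, hy⟩)
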